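/- arXiv:2605.21435 — 3 statements merged into one kernel-verified Lean document; each statement's English description precedes it below -/
import Mathlib

section
/- Let φ_A, φ_B : S₊^n → S₊^m be maps of the form φ_A(Σ) = AΣAᵀ, φ_B(Σ) = BΣBᵀ. The set Eq(φ_A, φ_B) = {Σ ∈ S₊^n : AΣAᵀ = BΣBᵀ}, together with the inclusion into S₊^n, is an equalizer in the category SDef: for any cone Z in SDef and any morphism φ_X : Z → S₊^n with φ_A ∘ φ_X = φ_B ∘ φ_X, there is a unique morphism u : Z → Eq(φ_A, φ_B) with i ∘ u = φ_X. -/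
open Matrix

/-- The set `Eq(φ_A, φ_B) = {S PSD | ASAᵀ = BSBᵀ}` with the inclusion is an
equalizer in SDef: any morphism `φ_X : Z → S₊^n` equalizing `φ_A` and `φ_B`
factors uniquely through it. -/
theorem sdef_equalizer {n m p : ℕ}
    (A B : Matrix (Fin m) (Fin n) ℝ)
    (Z : Set (Matrix (Fin p) (Fin p) ℝ)) (hZ : ∀ S ∈ Z, S.PosSemidef)
    (X : Matrix (Fin n) (Fin p) ℝ)
    (hX : ∀ S ∈ Z, A * (X * S * Xᵀ) * Aᵀ = B * (X * S * Xᵀ) * Bᵀ) :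
    ∃! u : Z → {S : Matrix (Fin n) (Fin n) ℝ // S.PosSemidef ∧ A * S * Aᵀ = B * S * Bᵀ},
      ∀ σ : Z, (u σ : Matrix (Fin n) (Fin n) ℝ) = X * (σ : Matrix (Fin p) (Fin p) ℝ) * Xᵀ := by
  refine ⟨fun σ => ⟨X * (σ : Matrix (Fin p) (Fin p) ℝ) * Xᵀ, ?_, hX σ σ.2⟩,
    fun σ => rfl, ?_⟩
  · have := (hZ σ σ.2).mul_mul_conjTranspose_same X
    simpa using this
  · intro v hv
    funext σ
    exact Subtype.ext (hv σ)
end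

section
/- Let G be a connected graph and (G, C) a sheaf of covariances with invertible restriction maps. Decompose the covariance sheaf Laplacian into positive and negative parts L_C = L_C⁺ + L_C⁻ (following the decomposition of the coboundary into δ⁺ and δ⁻). Then the equalizer Eq(L_C⁺, L_C⁻) equals H⁰(G, C), i.e., a 0-cochain Σ of PSD matrices satisfies L_C⁺(Σ) = L_C⁻(Σ) if and only if F_{v◁e} Σ_v F_{v◁e}ᵀ = F_{u◁e} Σ_u F_{u◁e}ᵀ for every edge e = (v,u). -/
open Matrix

variable {V E : Type*} {d : ℕ}

/-- Source of edge `e` under orientation `o` (endpoints `a e`, `b e`). -/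
def srcO (a b : E → V) (o : E → Bool) (e : E) : V := if o e then a e else b e

/-- Target of edge `e` under orientation `o`. -/
def tgtO (a b : E → V) (o : E → Bool) (e : E) : V := if o e then b e else a e

/-- Positive part of the covariance coboundary for orientation `o`. -/
def deltaP (a b : E → V) (o : E → Bool) (F : E → V → Matrix (Fin d) (Fin d) ℝ)
    (S : V → Matrix (Fin d) (Fin d) ℝ) (e : E) : Matrix (Fin d) (Fin d) ℝ :=
  F e (srcO a b o e) * S (srcO a b o e) * (F e (srcO a b o e))ᵀ

/-- Negative part of the covariance coboundary for orientation `o`. -/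
def deltaM (a b : E → V) (o : E → Bool) (F : E → V → Matrix (Fin d) (Fin d) ℝ)
    (S : V → Matrix (Fin d) (Fin d) ℝ) (e : E) : Matrix (Fin d) (Fin d) ℝ :=
  F e (tgtO a b o e) * S (tgtO a b o e) * (F e (tgtO a b o e))ᵀ

/-- Positive part `L_C⁺` of the covariance sheaf Laplacian (the `(δ⁺)ᵀδ⁺ + (δ⁻)ᵀδ⁻`
terms) at node `v`, for orientation `o`. -/
def lapP [Fintype E] [DecidableEq V] (a b : E → V) (o : E → Bool)
    (F : E → V → Matrix (Fin d) (Fin d) ℝ)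
    (S : V → Matrix (Fin d) (Fin d) ℝ) (v : V) : Matrix (Fin d) (Fin d) ℝ :=
  ∑ e : E,
    ((if v = srcO a b o e then (F e v)ᵀ * deltaP a b o F S e * F e v else 0) +
     (if v = tgtO a b o e then (F e v)ᵀ * deltaM a b o F S e * F e v else 0))

/-- Negative part `L_C⁻` of the covariance sheaf Laplacian (the cross terms
`(δ⁺)ᵀδ⁻ + (δ⁻)ᵀδ⁺`) at node `v`, for orientation `o`. -/
def lapM [Fintype E] [DecidableEq V] (a b : E → V) (o : E → Bool)
    (F : E → V → Matrix (Fin d) (Fin d) ℝ)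
    (S : V → Matrix (Fin d) (Fin d) ℝ) (v : V) : Matrix (Fin d) (Fin d) ℝ :=
  ∑ e : E,
    ((if v = srcO a b o e then (F e v)ᵀ * deltaM a b o F S e * F e v else 0) +
     (if v = tgtO a b o e then (F e v)ᵀ * deltaP a b o F S e * F e v else 0))

/-- For a connected graph and a covariance sheaf with invertible restriction maps,
a PSD 0-cochain is in the equalizer of `L_C⁺` and `L_C⁻` (for every choice of
edge orientations) iff it is a global section, i.e. `Eq(L_C⁺, L_C⁻) = H⁰(G,C)`. -/
theorem lap_equalizer_eq_H0 [Fintype E] [DecidableEq V]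
    (a b : E → V) (hloop : ∀ e, a e ≠ b e)
    (hconn : ∀ v w : V, Relation.ReflTransGen
      (fun x y => ∃ e, (a e = x ∧ b e = y) ∨ (a e = y ∧ b e = x)) v w)
    (F : E → V → Matrix (Fin d) (Fin d) ℝ)
    (hF : ∀ e v, IsUnit (F e v))
    (S : V → Matrix (Fin d) (Fin d) ℝ) (hS : ∀ v, (S v).PosSemidef) :
    (∀ o : E → Bool, ∀ v : V, lapP a b o F S v = lapM a b o F S v) ↔
    (∀ e : E, F e (a e) * S (a e) * (F e (a e))ᵀ
        = F e (b e) * S (b e) * (F e (b e))ᵀ) := by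
  classical
  constructor
  · intro h e0
    set o : E → Bool := fun _ => true with ho
    have hs : ∀ e, srcO a b o e = a e := fun e => rfl
    have ht : ∀ e, tgtO a b o e = b e := fun e => rfl
    -- abbreviations for the two edge covariance images
    set dP : E → Matrix (Fin d) (Fin d) ℝ :=
      fun e => F e (a e) * S (a e) * (F e (a e))ᵀ with hdP
    set dM : E → Matrix (Fin d) (Fin d) ℝ :=
      fun e => F e (b e) * S (b e) * (F e (b e))ᵀ with hdM
    have hdeltaP : ∀ e, deltaP a b o F S e = dP e := fun e => by
      simp [deltaP, hs, hdP]
    have hdeltaM : ∀ e, deltaM a b o F S e = dM e := fun e => by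
      simp [deltaM, ht, hdM]
    -- finite set of all endpoints
    set T : Finset V := Finset.univ.image a ∪ Finset.univ.image b with hT
    have hmem_a : ∀ e : E, a e ∈ T := fun e => by
      simp [hT, Finset.mem_union, Finset.mem_image]
    have hmem_b : ∀ e : E, b e ∈ T := fun e => by
      simp [hT, Finset.mem_union, Finset.mem_image]
    -- the trace pairing trick
    have tr_helper : ∀ (X : Matrix (Fin d) (Fin d) ℝ) (u : V) (e : E),
        Matrix.trace (S u * ((F e u)ᵀ * X * F e u))
          = Matrix.trace (X * (F e u * S u * (F e u)ᵀ)) := by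
      intro X u e
      rw [show S u * ((F e u)ᵀ * X * F e u) = (S u * (F e u)ᵀ * X) * F e u by
        noncomm_ring]
      rw [Matrix.trace_mul_comm]
      rw [show F e u * (S u * (F e u)ᵀ * X) = (F e u * S u * (F e u)ᵀ) * X by
        noncomm_ring]
      rw [Matrix.trace_mul_comm]
    have h1 : ∑ v ∈ T, Matrix.trace (S v * (lapP a b o F S v - lapM a b o F S v)) = 0 := by
      refine Finset.sum_eq_zero fun v _ => ?_
      rw [h o v, sub_self, mul_zero, Matrix.trace_zero]
    have expand : ∑ v ∈ T, Matrix.trace (S v * (lapP a b o F S v - lapM a b o F S v))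
        = ∑ e : E, Matrix.trace ((dP e - dM e) * (dP e - dM e)) := by
      simp only [lapP, lapM, ← Finset.sum_sub_distrib, Finset.mul_sum, Matrix.trace_sum]
      rw [Finset.sum_comm]
      refine Finset.sum_congr rfl fun e _ => ?_
      simp only [hs, ht, hdeltaP, hdeltaM]
      have : ∀ v ∈ T, Matrix.trace (S v *
          ((if v = a e then (F e v)ᵀ * dP e * F e v else 0) +
            (if v = b e then (F e v)ᵀ * dM e * F e v else 0) -
           ((if v = a e then (F e v)ᵀ * dM e * F e v else 0) +
            (if v = b e then (F e v)ᵀ * dP e * F e v else 0))))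
        = ((if v = a e then Matrix.trace (S v * ((F e v)ᵀ * dP e * F e v)) else 0) +
            (if v = b e then Matrix.trace (S v * ((F e v)ᵀ * dM e * F e v)) else 0) -
           ((if v = a e then Matrix.trace (S v * ((F e v)ᵀ * dM e * F e v)) else 0) +
            (if v = b e then Matrix.trace (S v * ((F e v)ᵀ * dP e * F e v)) else 0))) := by
        intro v _
        simp only [mul_sub, mul_add, mul_ite, mul_zero, Matrix.trace_sub, Matrix.trace_add,
          apply_ite Matrix.trace, Matrix.trace_zero]
      rw [Finset.sum_congr rfl this]
      simp only [Finset.sum_sub_distrib, Finset.sum_add_distrib, Finset.sum_ite_eq',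
        hmem_a e, hmem_b e, if_pos]
      rw [tr_helper, tr_helper, tr_helper, tr_helper]
      have foldP : F e (a e) * S (a e) * (F e (a e))ᵀ = dP e := rfl
      have foldM : F e (b e) * S (b e) * (F e (b e))ᵀ = dM e := rfl
      rw [foldP, foldM]
      simp only [sub_mul, mul_sub, Matrix.trace_sub]
      ring
    have hswap : ∑ e : E, Matrix.trace ((dP e - dM e) * (dP e - dM e)) = 0 := by
      rw [← expand]; exact h1
    -- symmetry of the difference matrices
    have hSt : ∀ v, (S v)ᵀ = S v := fun v => by
      rw [← Matrix.conjTranspose_eq_transpose_of_trivial]; exact (hS v).1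
    have hsymm : ∀ e, (dP e - dM e)ᵀ = dP e - dM e := by
      intro e
      simp [hdP, hdM, Matrix.transpose_sub, Matrix.transpose_mul,
        Matrix.transpose_transpose, hSt, Matrix.mul_assoc]
    -- trace of the square is a sum of squares
    have key : ∀ e, Matrix.trace ((dP e - dM e) * (dP e - dM e))
        = ∑ i, ∑ j, ((dP e - dM e) i j) ^ 2 := by
      intro e
      have hD : ∀ i j, (dP e - dM e) j i = (dP e - dM e) i j := fun i j =>
        congrFun (congrFun (hsymm e) i) j
      simp only [Matrix.trace, Matrix.diag, Matrix.mul_apply]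
      refine Finset.sum_congr rfl fun i _ => Finset.sum_congr rfl fun j _ => ?_
      rw [hD i j, sq]
    have hnn : ∀ e ∈ Finset.univ, (0:ℝ) ≤ Matrix.trace ((dP e - dM e) * (dP e - dM e)) := by
      intro e _
      rw [key e]
      positivity
    have hzero : Matrix.trace ((dP e0 - dM e0) * (dP e0 - dM e0)) = 0 :=
      (Finset.sum_eq_zero_iff_of_nonneg hnn).mp hswap e0 (Finset.mem_univ e0)
    rw [key e0] at hzero
    have hD0 : dP e0 - dM e0 = 0 := by
      ext i j
      have h2 : ∀ i ∈ (Finset.univ : Finset (Fin d)),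
          (0:ℝ) ≤ ∑ j, ((dP e0 - dM e0) i j) ^ 2 := by
        intro i _; positivity
      have h3 := (Finset.sum_eq_zero_iff_of_nonneg h2).mp hzero i (Finset.mem_univ i)
      have h4 : ∀ j ∈ (Finset.univ : Finset (Fin d)),
          (0:ℝ) ≤ ((dP e0 - dM e0) i j) ^ 2 := fun j _ => sq_nonneg _
      have h5 := (Finset.sum_eq_zero_iff_of_nonneg h4).mp h3 j (Finset.mem_univ j)
      simpa using pow_eq_zero_iff (n := 2) (by norm_num) |>.mp h5
    have := sub_eq_zero.mp hD0
    simpa [hdP, hdM] using this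
  · intro h o v
    unfold lapP lapM
    refine Finset.sum_congr rfl fun e _ => ?_
    have hde : deltaP a b o F S e = deltaM a b o F S e := by
      by_cases hoe : o e
      · simp [deltaP, deltaM, srcO, tgtO, hoe, h e]
      · simp [deltaP, deltaM, srcO, tgtO, hoe, (h e).symm]
    rw [hde]
end

section
/- Let (G, F) be a Gaussian sheaf with orthogonal restriction maps over a connected graph, and fix a vertex v and a Gaussian ϑ = (μ, Σ). There exists a global section ν with ν_v = ϑ if and only if for every cycle γ based at v the transport P^γ_{v→v} lies in the stabilizer of ϑ (i.e., P^γ_{v→v}(ϑ) = ϑ). -/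
open Matrix

variable {V E : Type*} {d : ℕ}

/-- One transport step across an edge `e` from `w` to `u` (recorded as `(e, w, u)`):
`(μ,Σ) ↦ (F_{u◁e}ᵀ F_{w◁e} μ, F_{u◁e}ᵀ F_{w◁e} Σ F_{w◁e}ᵀ F_{u◁e})`. -/
def transportStep (F : E → V → Matrix (Fin d) (Fin d) ℝ) (s : E × V × V)
    (p : (Fin d → ℝ) × Matrix (Fin d) (Fin d) ℝ) :
    (Fin d → ℝ) × Matrix (Fin d) (Fin d) ℝ :=
  ((((F s.1 s.2.2)ᵀ * F s.1 s.2.1)).mulVec p.1,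
    ((F s.1 s.2.2)ᵀ * F s.1 s.2.1) * p.2 * ((F s.1 s.2.2)ᵀ * F s.1 s.2.1)ᵀ)

/-- Transport along a path, composing the edge transport maps. -/
def transport (F : E → V → Matrix (Fin d) (Fin d) ℝ) (γ : List (E × V × V))
    (p : (Fin d → ℝ) × Matrix (Fin d) (Fin d) ℝ) :
    (Fin d → ℝ) × Matrix (Fin d) (Fin d) ℝ :=
  γ.foldl (fun q s => transportStep F s q) p

/-- `IsWalk a b v γ u`: the list of steps `γ` is a walk from `v` to `u` in the
graph with edge-endpoint maps `a`, `b`. -/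
def IsWalk (a b : E → V) : V → List (E × V × V) → V → Prop
  | v, [], u => v = u
  | v, s :: rest, u =>
      s.2.1 = v ∧ ((a s.1 = s.2.1 ∧ b s.1 = s.2.2) ∨ (a s.1 = s.2.2 ∧ b s.1 = s.2.1)) ∧
        IsWalk a b s.2.2 rest u


section AuxLemmas

variable {V E : Type*} {d : ℕ}

lemma isWalk_append {a b : E → V} {x y z : V} {γ γ' : List (E × V × V)}
    (h : IsWalk a b x γ y) (h' : IsWalk a b y γ' z) : IsWalk a b x (γ ++ γ') z := by
  induction γ generalizing x with
  | nil => rw [show x = y from h]; exact h'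
  | cons s rest ih =>
    obtain ⟨h1, h2, h3⟩ := h
    exact ⟨h1, h2, ih h3⟩

/-- Reverse of a walk: reverse the list and swap the vertices of each step. -/
def walkRev (γ : List (E × V × V)) : List (E × V × V) :=
  (γ.map fun s => (s.1, s.2.2, s.2.1)).reverse

lemma walkRev_cons (s : E × V × V) (rest : List (E × V × V)) :
    walkRev (s :: rest) = walkRev rest ++ [(s.1, s.2.2, s.2.1)] := by
  simp [walkRev]

lemma walkRev_walkRev (γ : List (E × V × V)) : walkRev (walkRev γ) = γ := by
  simp only [walkRev, List.map_reverse, List.reverse_reverse, List.map_map]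
  exact List.map_id'' (fun s => rfl) γ

lemma isWalk_rev {a b : E → V} {x y : V} {γ : List (E × V × V)}
    (h : IsWalk a b x γ y) : IsWalk a b y (walkRev γ) x := by
  induction γ generalizing x with
  | nil => exact (show x = y from h).symm
  | cons s rest ih =>
    obtain ⟨h1, h2, h3⟩ := h
    rw [walkRev_cons]
    exact isWalk_append (ih h3) ⟨rfl, by tauto, h1⟩

lemma transport_append (F : E → V → Matrix (Fin d) (Fin d) ℝ)
    (γ γ' : List (E × V × V)) (p : (Fin d → ℝ) × Matrix (Fin d) (Fin d) ℝ) :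
    transport F (γ ++ γ') p = transport F γ' (transport F γ p) := by
  simp [transport, List.foldl_append]

lemma transportStep_rev {F : E → V → Matrix (Fin d) (Fin d) ℝ}
    (horth : ∀ e v, (F e v)ᵀ * F e v = 1) (e : E) (x y : V)
    (p : (Fin d → ℝ) × Matrix (Fin d) (Fin d) ℝ) :
    transportStep F (e, y, x) (transportStep F (e, x, y) p) = p := by
  have key : ((F e x)ᵀ * F e y) * ((F e y)ᵀ * F e x) = 1 := by
    rw [Matrix.mul_assoc, ← Matrix.mul_assoc (F e y),
      mul_eq_one_comm.mp (horth e y), Matrix.one_mul, horth e x]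
  have key2 : ((F e y)ᵀ * F e x)ᵀ * ((F e x)ᵀ * F e y)ᵀ = 1 := by
    rw [← Matrix.transpose_mul, key, Matrix.transpose_one]
  unfold transportStep
  refine Prod.ext ?_ ?_
  · show (((F e x)ᵀ * F e y)).mulVec ((((F e y)ᵀ * F e x)).mulVec p.1) = p.1
    rw [Matrix.mulVec_mulVec, key, Matrix.one_mulVec]
  · show ((F e x)ᵀ * F e y) * (((F e y)ᵀ * F e x) * p.2 * ((F e y)ᵀ * F e x)ᵀ)
        * ((F e x)ᵀ * F e y)ᵀ = p.2
    calc ((F e x)ᵀ * F e y) * (((F e y)ᵀ * F e x) * p.2 * ((F e y)ᵀ * F e x)ᵀ)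
          * ((F e x)ᵀ * F e y)ᵀ
        = (((F e x)ᵀ * F e y) * ((F e y)ᵀ * F e x)) * p.2
          * (((F e y)ᵀ * F e x)ᵀ * ((F e x)ᵀ * F e y)ᵀ) := by
          simp only [Matrix.mul_assoc]
      _ = p.2 := by rw [key, key2, Matrix.one_mul, Matrix.mul_one]

lemma transport_rev {F : E → V → Matrix (Fin d) (Fin d) ℝ}
    (horth : ∀ e v, (F e v)ᵀ * F e v = 1) (γ : List (E × V × V))
    (p : (Fin d → ℝ) × Matrix (Fin d) (Fin d) ℝ) :
    transport F (walkRev γ) (transport F γ p) = p := by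
  induction γ generalizing p with
  | nil => rfl
  | cons s rest ih =>
    have hs : transport F (s :: rest) p = transport F rest (transportStep F s p) := rfl
    rw [hs, walkRev_cons, transport_append, ih (transportStep F s p)]
    have : transport F [(s.1, s.2.2, s.2.1)] (transportStep F s p)
        = transportStep F (s.1, s.2.2, s.2.1) (transportStep F (s.1, s.2.1, s.2.2) p) := rfl
    rw [this, transportStep_rev horth]

lemma transport_rev' {F : E → V → Matrix (Fin d) (Fin d) ℝ}
    (horth : ∀ e v, (F e v)ᵀ * F e v = 1) (γ : List (E × V × V))
    (p : (Fin d → ℝ) × Matrix (Fin d) (Fin d) ℝ) :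
    transport F γ (transport F (walkRev γ) p) = p := by
  have := transport_rev horth (walkRev γ) p
  rwa [walkRev_walkRev] at this

lemma transport_psd {F : E → V → Matrix (Fin d) (Fin d) ℝ} (γ : List (E × V × V))
    {p : (Fin d → ℝ) × Matrix (Fin d) (Fin d) ℝ} (hp : p.2.PosSemidef) :
    (transport F γ p).2.PosSemidef := by
  induction γ generalizing p with
  | nil => exact hp
  | cons s rest ih =>
    refine ih (p := transportStep F s p) ?_
    have := hp.mul_mul_conjTranspose_same ((F s.1 s.2.2)ᵀ * F s.1 s.2.1)
    simpa [transportStep, Matrix.conjTranspose_eq_transpose_of_trivial] using this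

end AuxLemmas
lemma transport_section {a b : E → V} {F : E → V → Matrix (Fin d) (Fin d) ℝ}
    (horth : ∀ e v, (F e v)ᵀ * F e v = 1)
    {μ : V → (Fin d → ℝ)} {S : V → Matrix (Fin d) (Fin d) ℝ}
    (hμc : ∀ e, (F e (a e)).mulVec (μ (a e)) = (F e (b e)).mulVec (μ (b e)))
    (hSc : ∀ e, F e (a e) * S (a e) * (F e (a e))ᵀ
        = F e (b e) * S (b e) * (F e (b e))ᵀ)
    {x y : V} {γ : List (E × V × V)} (h : IsWalk a b x γ y) :
    transport F γ (μ x, S x) = (μ y, S y) := by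
  induction γ generalizing x with
  | nil => obtain rfl : x = y := h; rfl
  | cons s rest ih =>
    obtain ⟨h1, h2, h3⟩ := h
    subst h1
    have hstep : transportStep F s (μ s.2.1, S s.2.1) = (μ s.2.2, S s.2.2) := by
      have hμe : (F s.1 s.2.1).mulVec (μ s.2.1) = (F s.1 s.2.2).mulVec (μ s.2.2) := by
        rcases h2 with ⟨ha, hb⟩ | ⟨ha, hb⟩
        · have := hμc s.1; rw [ha, hb] at this; exact this
        · have := hμc s.1; rw [ha, hb] at this; exact this.symm
      have hSe : F s.1 s.2.1 * S s.2.1 * (F s.1 s.2.1)ᵀ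
          = F s.1 s.2.2 * S s.2.2 * (F s.1 s.2.2)ᵀ := by
        rcases h2 with ⟨ha, hb⟩ | ⟨ha, hb⟩
        · have := hSc s.1; rw [ha, hb] at this; exact this
        · have := hSc s.1; rw [ha, hb] at this; exact this.symm
      refine Prod.ext ?_ ?_
      · show ((F s.1 s.2.2)ᵀ * F s.1 s.2.1).mulVec (μ s.2.1) = μ s.2.2
        rw [← Matrix.mulVec_mulVec, hμe, Matrix.mulVec_mulVec, horth,
          Matrix.one_mulVec]
      · show ((F s.1 s.2.2)ᵀ * F s.1 s.2.1) * S s.2.1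
            * ((F s.1 s.2.2)ᵀ * F s.1 s.2.1)ᵀ = S s.2.2
        calc ((F s.1 s.2.2)ᵀ * F s.1 s.2.1) * S s.2.1
              * ((F s.1 s.2.2)ᵀ * F s.1 s.2.1)ᵀ
            = (F s.1 s.2.2)ᵀ * (F s.1 s.2.1 * S s.2.1 * (F s.1 s.2.1)ᵀ)
              * F s.1 s.2.2 := by
              rw [Matrix.transpose_mul, Matrix.transpose_transpose]
              simp only [Matrix.mul_assoc]
          _ = (F s.1 s.2.2)ᵀ * (F s.1 s.2.2 * S s.2.2 * (F s.1 s.2.2)ᵀ)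
              * F s.1 s.2.2 := by rw [hSe]
          _ = ((F s.1 s.2.2)ᵀ * F s.1 s.2.2) * S s.2.2
              * ((F s.1 s.2.2)ᵀ * F s.1 s.2.2) := by
              simp only [Matrix.mul_assoc]
          _ = S s.2.2 := by rw [horth, Matrix.one_mul, Matrix.mul_one]
    have : transport F (s :: rest) (μ s.2.1, S s.2.1)
        = transport F rest (transportStep F s (μ s.2.1, S s.2.1)) := rfl
    rw [this, hstep]
    exact ih h3
/-- For a Gaussian sheaf with orthogonal restriction maps over a connected graph:
there is a global section `ν` with `ν_v = ϑ` iff every cycle transport based at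
`v` stabilizes `ϑ`. -/
theorem section_exists_iff_cycle_stabilizes (a b : E → V)
    (hconn : ∀ v w : V, Relation.ReflTransGen
      (fun x y => ∃ e, (a e = x ∧ b e = y) ∨ (a e = y ∧ b e = x)) v w)
    (F : E → V → Matrix (Fin d) (Fin d) ℝ)
    (horth : ∀ e v, (F e v)ᵀ * F e v = 1)
    (v : V) (ϑ : (Fin d → ℝ) × Matrix (Fin d) (Fin d) ℝ)
    (hϑ : ϑ.2.PosSemidef) :
    (∃ (μ : V → (Fin d → ℝ)) (S : V → Matrix (Fin d) (Fin d) ℝ),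
        (∀ w, (S w).PosSemidef) ∧
        (∀ e, (F e (a e)).mulVec (μ (a e)) = (F e (b e)).mulVec (μ (b e))) ∧
        (∀ e, F e (a e) * S (a e) * (F e (a e))ᵀ
            = F e (b e) * S (b e) * (F e (b e))ᵀ) ∧
        μ v = ϑ.1 ∧ S v = ϑ.2) ↔
    (∀ γ : List (E × V × V), IsWalk a b v γ v → transport F γ ϑ = ϑ) := by
  constructor
  · rintro ⟨μ, S, _, hμc, hSc, hμv, hSv⟩ γ hγ
    have hϑeq : ϑ = (μ v, S v) := Prod.ext hμv.symm hSv.symm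
    rw [hϑeq, transport_section horth hμc hSc hγ]
  · intro hcyc
    have hwalk : ∀ w, ∃ γ, IsWalk a b v γ w := by
      intro w
      induction hconn v w with
      | refl => exact ⟨[], rfl⟩
      | tail _ hr ih =>
        obtain ⟨γ, hγ⟩ := ih
        obtain ⟨e, he⟩ := hr
        exact ⟨γ ++ [(e, _, _)], isWalk_append hγ ⟨rfl, he, rfl⟩⟩
    choose g hg using hwalk
    set ν : V → (Fin d → ℝ) × Matrix (Fin d) (Fin d) ℝ :=
      fun w => transport F (g w) ϑ with hν
    have hνv : ν v = ϑ := hcyc (g v) (hg v)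
    have hkey : ∀ e, transportStep F (e, a e, b e) (ν (a e)) = ν (b e) := by
      intro e
      have hcycwalk : IsWalk a b v
          (g (a e) ++ ([(e, a e, b e)] ++ walkRev (g (b e)))) v :=
        isWalk_append (hg (a e))
          (isWalk_append ⟨rfl, Or.inl ⟨rfl, rfl⟩, rfl⟩ (isWalk_rev (hg (b e))))
      have := hcyc _ hcycwalk
      rw [transport_append, transport_append] at this
      have h1 : transport F (g (a e)) ϑ = ν (a e) := rfl
      rw [h1] at this
      have h2 : transport F [(e, a e, b e)] (ν (a e))
          = transportStep F (e, a e, b e) (ν (a e)) := rfl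
      rw [h2] at this
      have := congrArg (transport F (g (b e))) this
      rwa [transport_rev' horth] at this
    refine ⟨fun w => (ν w).1, fun w => (ν w).2, fun w => transport_psd (g w) hϑ,
      ?_, ?_, congrArg Prod.fst hνv, congrArg Prod.snd hνv⟩
    · intro e
      beta_reduce
      have hμe : ((F e (b e))ᵀ * F e (a e)).mulVec ((ν (a e)).1) = (ν (b e)).1 :=
        congrArg Prod.fst (hkey e)
      rw [← hμe, Matrix.mulVec_mulVec, ← Matrix.mul_assoc,
        mul_eq_one_comm.mp (horth e (b e)), Matrix.one_mul]
    · intro e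
      beta_reduce
      have hSe : ((F e (b e))ᵀ * F e (a e)) * (ν (a e)).2
          * ((F e (b e))ᵀ * F e (a e))ᵀ = (ν (b e)).2 :=
        congrArg Prod.snd (hkey e)
      have hFbM : F e (b e) * ((F e (b e))ᵀ * F e (a e)) = F e (a e) := by
        rw [← Matrix.mul_assoc, mul_eq_one_comm.mp (horth e (b e)),
          Matrix.one_mul]
      rw [← hSe]
      calc F e (a e) * (ν (a e)).2 * (F e (a e))ᵀ
          = (F e (b e) * ((F e (b e))ᵀ * F e (a e))) * (ν (a e)).2
            * (F e (b e) * ((F e (b e))ᵀ * F e (a e)))ᵀ := by rw [hFbM]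
        _ = F e (b e) * (((F e (b e))ᵀ * F e (a e)) * (ν (a e)).2
            * ((F e (b e))ᵀ * F e (a e))ᵀ) * (F e (b e))ᵀ := by
            rw [Matrix.transpose_mul]
            simp only [Matrix.mul_assoc]
end
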